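/- The configuration f_{G->} associated to an acyclic orientation of a connected loopless multigraph G, defined by (f_{G->})_i = d_i^- - 1 where d_i^- is the indegree of vertex i, is not toppling equivalent to any configuration with all entries nonnegative. -/

import Mathlib

/-- Laplacian configuration `Δ^(i)` of the multigraph given by edge-multiplicity matrix `e`. -/
def lapG {n : ℕ} (e : Fin n → Fin n → ℕ) (i : Fin n) : Fin n → ℤ :=
  fun j => if j = i then (∑ k, (e i k : ℤ)) else -(e i j : ℤ)

/-- Toppling equivalence: `f - g` lies in the lattice generated by the `Δ^(i)`. -/
def topG {n : ℕ} (e : Fin n → Fin n → ℕ) (f g : Fin n → ℤ) : Prop :=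
  ∃ a : Fin n → ℤ, f - g = ∑ i, a i • lapG e i

/-- `L_G`-effectiveness: toppling equivalent to a nonnegative configuration. -/
def effG {n : ℕ} (e : Fin n → Fin n → ℕ) (f : Fin n → ℤ) : Prop :=
  ∃ g : Fin n → ℤ, topG e f g ∧ ∀ i, 0 ≤ g i

/-- The Baker–Norine rank:
`rankG e f + 1 = min {deg λ | λ ≥ 0, f - λ not L_G-effective}`. -/
noncomputable def rankG {n : ℕ} (e : Fin n → Fin n → ℕ) (f : Fin n → ℤ) : ℤ :=
  sInf {d : ℤ | ∃ lam : Fin n → ℤ,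
    (∀ i, 0 ≤ lam i) ∧ (∑ i, lam i) = d ∧ ¬ effG e (f - lam)} - 1

theorem stmt7 (n : ℕ) (hn : 1 ≤ n) (e : Fin n → Fin n → ℕ)
    (hsym : ∀ i j, e i j = e j i) (hloop : ∀ i, e i i = 0)
    (hconn : ∀ i j : Fin n, Relation.ReflTransGen (fun a b => 0 < e a b) i j)
    (ε : Fin n → Fin n → ℕ) (hor : ∀ i j, ε i j + ε j i = e i j)
    (hacyc : ∀ i : Fin n, ¬ Relation.TransGen (fun a b => 0 < ε a b) i i) :
    ¬ effG e (fun i => (∑ j, (ε j i : ℤ)) - 1) := by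
  rintro ⟨g, ⟨a, ha⟩, hg⟩
  have hne : (Finset.univ : Finset (Fin n)).Nonempty := ⟨⟨0, hn⟩, Finset.mem_univ _⟩
  obtain ⟨i0, -, hmax⟩ := Finset.exists_max_image Finset.univ a hne
  set M := a i0 with hM
  -- the relation restricted to the set of maximizers
  set r : Fin n → Fin n → Prop := fun x y => 0 < ε x y ∧ a x = M ∧ a y = M with hr
  have hwf : WellFounded r := by
    have hirr : ∀ x, ¬ Relation.TransGen r x x := by
      intro x hx
      exact hacyc x (Relation.TransGen.mono (fun p q h => h.1) x x hx)
    have : IsIrrefl (Fin n) (Relation.TransGen r) := ⟨fun x => hirr x⟩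
    have : IsTrans (Fin n) (Relation.TransGen r) :=
      ⟨fun _ _ _ h h' => h.trans h'⟩
    have hwf' : WellFounded (Relation.TransGen r) :=
      Finite.wellFounded_of_trans_of_irrefl _
    exact Subrelation.wf (fun h => Relation.TransGen.single h) hwf'
  obtain ⟨i, hiS, hmin⟩ := hwf.has_min {x | a x = M} ⟨i0, rfl⟩
  have hiM : a i = M := hiS
  have haj : ∀ j, a j ≤ M := fun j => hmax j (Finset.mem_univ j)
  -- evaluate the toppling identity at i
  have hEval : (∑ j, (ε j i : ℤ)) - 1 - g i = ∑ j, a j * lapG e j i := by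
    have := congrFun ha i
    simpa [Finset.sum_apply] using this
  -- rewrite the laplacian sum
  have hLap : ∑ j, a j * lapG e j i = ∑ j, (a i - a j) * (e i j : ℤ) := by
    have h1 : ∀ j : Fin n, a j * lapG e j i
        = (if i = j then a j * ∑ k, (e j k : ℤ) else 0) - a j * (e j i : ℤ) := by
      intro j
      by_cases h : i = j
      · subst h
        simp [lapG, hloop i]
      · simp [lapG, h, mul_comm]
    rw [Finset.sum_congr rfl (fun j _ => h1 j)]
    rw [Finset.sum_sub_distrib, Finset.sum_ite_eq Finset.univ i (fun j => a j * ∑ k, (e j k : ℤ))]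
    have h2 : ∀ j : Fin n, (a i - a j) * (e i j : ℤ) = a i * (e i j : ℤ) - a j * (e i j : ℤ) := by
      intro j; ring
    rw [Finset.sum_congr rfl (fun j _ => h2 j), Finset.sum_sub_distrib]
    simp only [Finset.mem_univ, if_pos, ← Finset.mul_sum]
    congr 1
    exact Finset.sum_congr rfl (fun j _ => by rw [hsym j i])
  -- termwise bound
  have hterm : ∀ j : Fin n, (ε j i : ℤ) ≤ (a i - a j) * (e i j : ℤ) := by
    intro j
    by_cases hz : ε j i = 0
    · rw [hz]
      exact mul_nonneg (by linarith [haj j, hiM]) (by positivity)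
    · have hjpos : 0 < ε j i := Nat.pos_of_ne_zero hz
      have hjM : a j ≠ M := by
        intro hjM
        exact hmin j hjM ⟨hjpos, hjM, hiM⟩
      have : a j < M := lt_of_le_of_ne (haj j) hjM
      have h1 : (1 : ℤ) ≤ a i - a j := by rw [hiM]; omega
      have h2 : (ε j i : ℤ) ≤ (e i j : ℤ) := by
        have := hor j i
        rw [hsym i j]
        omega
      calc (ε j i : ℤ) ≤ (e i j : ℤ) := h2
        _ = 1 * (e i j : ℤ) := (one_mul _).symm
        _ ≤ (a i - a j) * (e i j : ℤ) := by
            exact mul_le_mul_of_nonneg_right h1 (by positivity)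
  have hsumle : ∑ j, (ε j i : ℤ) ≤ ∑ j, (a i - a j) * (e i j : ℤ) :=
    Finset.sum_le_sum (fun j _ => hterm j)
  have hgi := hg i
  rw [hLap] at hEval
  omega
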